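/- Fix T > 0, m > 0 and c > 0, and let h : [0, T) → ℝ be continuous with h_t ≥ c/(T−t) for all t ∈ [0, T). Define H_t = ∫₀ᵗ h_s ds and z_t = (h_t / h_0) · exp(−H_t/(m+1)). Then for every t ∈ [0, T), z is integrable on [t, T) (as an improper integral) and the identity h_t · ∫ₜᵀ z_s ds = (m+1) · z_t holds. -/

import Mathlib

open Real MeasureTheory Set Filter
open scoped Topology

/-- For a continuous reversion rate `h` on `[0,T)` with the blow-up lower bound
`h_t ≥ c/(T−t)`, the function `z_t = (h_t/h_0)·exp(−H_t/(m+1))` with `H_t = ∫₀ᵗ h_s ds`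
is integrable on `[t,T)` and satisfies `h_t · ∫ₜᵀ z_s ds = (m+1)·z_t`. -/
theorem stmt_5 (T m c : ℝ) (hT : 0 < T) (hm : 0 < m) (hc : 0 < c)
    (h : ℝ → ℝ) (hcont : ContinuousOn h (Ico 0 T))
    (hlb : ∀ t ∈ Ico (0 : ℝ) T, c / (T - t) ≤ h t)
    (H : ℝ → ℝ) (hH : ∀ t : ℝ, H t = ∫ s in (0 : ℝ)..t, h s)
    (z : ℝ → ℝ) (hz : ∀ t : ℝ, z t = (h t / h 0) * Real.exp (-H t / (m + 1))) :
    ∀ t ∈ Ico (0 : ℝ) T,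
      IntegrableOn z (Ioo t T) ∧ h t * ∫ s in Ioo t T, z s = (m + 1) * z t := by
  have hm1 : (0:ℝ) < m + 1 := by linarith
  have hpos : ∀ s ∈ Ico (0:ℝ) T, 0 < h s := by
    intro s hs
    exact lt_of_lt_of_le (div_pos hc (by linarith [hs.2])) (hlb s hs)
  have h0pos : 0 < h 0 := hpos 0 ⟨le_refl _, hT⟩
  -- h is interval-integrable on [0, x] for x < T
  have hintg : ∀ x ∈ Ico (0:ℝ) T, IntervalIntegrable h volume 0 x := by
    intro x hx
    apply ContinuousOn.intervalIntegrable
    apply hcont.mono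
    rw [uIcc_of_le hx.1]
    exact fun y hy => ⟨hy.1, lt_of_le_of_lt hy.2 hx.2⟩
  -- derivative of H
  have hHderiv : ∀ x ∈ Ioo (0:ℝ) T, HasDerivAt H (h x) x := by
    intro x hx
    have hx' : x ∈ Ico (0:ℝ) T := ⟨hx.1.le, hx.2⟩
    have hmeas : StronglyMeasurableAtFilter h (𝓝 x) :=
      ⟨Ioo 0 T, isOpen_Ioo.mem_nhds hx,
        (hcont.mono Ioo_subset_Ico_self).aestronglyMeasurable measurableSet_Ioo⟩
    have hca : ContinuousAt h x :=
      hcont.continuousAt (mem_of_superset (isOpen_Ioo.mem_nhds hx) Ioo_subset_Ico_self)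
    have hd := intervalIntegral.integral_hasDerivAt_right (hintg x hx') hmeas hca
    have hHe : H = fun u => ∫ s in (0:ℝ)..u, h s := funext hH
    rw [hHe]
    exact hd
  -- continuity of H on [0, T)
  have hHcont : ContinuousOn H (Ico 0 T) := by
    intro x hx
    rcases exists_between hx.2 with ⟨b, hxb, hbT⟩
    have h0b : (0:ℝ) ≤ b := hx.1.trans hxb.le
    have hintb : IntegrableOn h (uIcc 0 b) volume := by
      rw [uIcc_of_le h0b]
      exact (hcont.mono (fun y hy => ⟨hy.1, lt_of_le_of_lt hy.2 hbT⟩)).integrableOn_Icc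
    have hcw : ContinuousWithinAt (fun u => ∫ s in (0:ℝ)..u, h s) (uIcc 0 b) x := by
      apply intervalIntegral.continuousOn_primitive_interval hintb
      rw [uIcc_of_le h0b]
      exact ⟨hx.1, hxb.le⟩
    have hHe : H = fun u => ∫ s in (0:ℝ)..u, h s := funext hH
    rw [hHe]
    apply hcw.mono_of_mem_nhdsWithin
    rw [uIcc_of_le h0b]
    have hIb : Iio b ∈ 𝓝[Ico 0 T] x := nhdsWithin_le_nhds (Iio_mem_nhds hxb)
    filter_upwards [hIb, self_mem_nhdsWithin] with y hy1 hy2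
    exact ⟨hy2.1, hy1.le⟩
  -- H tends to +∞ at T⁻
  have hHtop : Tendsto H (𝓝[<] T) atTop := by
    have hLB : ∀ s ∈ Ico (0:ℝ) T, c * Real.log T - c * Real.log (T - s) ≤ H s := by
      intro s hs
      have hTs : ∀ u ∈ Icc (0:ℝ) s, 0 < T - u := by
        intro u hu
        have : u < T := lt_of_le_of_lt hu.2 hs.2
        linarith
      have hderiv : ∀ u ∈ uIcc (0:ℝ) s,
          HasDerivAt (fun v => -c * Real.log (T - v)) (c / (T - u)) u := by
        intro u hu
        rw [uIcc_of_le hs.1] at hu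
        have hTu : T - u ≠ 0 := ne_of_gt (hTs u hu)
        have d1 : HasDerivAt (fun v => T - v) (-1) u := by
          simpa using (hasDerivAt_id u).const_sub T
        have d2 : HasDerivAt (fun v => Real.log (T - v)) ((T - u)⁻¹ * (-1)) u :=
          (Real.hasDerivAt_log hTu).comp u d1
        have d3 := d2.const_mul (-c)
        exact d3.congr_deriv (by ring)
      have hci : IntervalIntegrable (fun u => c / (T - u)) volume 0 s := by
        apply ContinuousOn.intervalIntegrable
        rw [uIcc_of_le hs.1]
        exact continuousOn_const.div (continuousOn_const.sub continuousOn_id)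
          (fun u hu => ne_of_gt (hTs u hu))
      have heq := intervalIntegral.integral_eq_sub_of_hasDerivAt hderiv hci
      have hmono : ∫ u in (0:ℝ)..s, c / (T - u) ≤ ∫ u in (0:ℝ)..s, h u := by
        apply intervalIntegral.integral_mono_on hs.1 hci (hintg s hs)
        intro u hu
        exact hlb u ⟨hu.1, lt_of_le_of_lt hu.2 hs.2⟩
      rw [hH s]
      calc c * Real.log T - c * Real.log (T - s)
          = -c * Real.log (T - s) - -c * Real.log (T - 0) := by rw [sub_zero]; ring
        _ = ∫ u in (0:ℝ)..s, c / (T - u) := heq.symm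
        _ ≤ ∫ u in (0:ℝ)..s, h u := hmono
    have hsub : Tendsto (fun s => T - s) (𝓝[<] T) (𝓝[>] (0:ℝ)) := by
      apply tendsto_nhdsWithin_of_tendsto_nhds_of_eventually_within
      · have h2 : Tendsto (fun s => T - s) (𝓝 T) (𝓝 (T - T)) :=
          tendsto_const_nhds.sub tendsto_id
        rw [sub_self] at h2
        exact h2.mono_left nhdsWithin_le_nhds
      · filter_upwards [self_mem_nhdsWithin] with s hs
        simp only [mem_Iio] at hs
        simpa [mem_Ioi] using sub_pos.2 hs
    have hlog : Tendsto (fun s => Real.log (T - s)) (𝓝[<] T) atBot :=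
      Real.tendsto_log_nhdsGT_zero.comp hsub
    have hLtop : Tendsto (fun s => c * Real.log T - c * Real.log (T - s)) (𝓝[<] T) atTop := by
      have h1 : Tendsto (fun s => c * Real.log (T - s)) (𝓝[<] T) atBot :=
        (tendsto_const_mul_atBot_of_pos hc).2 hlog
      have h2 : Tendsto (fun s => -(c * Real.log (T - s))) (𝓝[<] T) atTop :=
        tendsto_neg_atTop_iff.2 h1
      have h3 := tendsto_atTop_add_const_left _ (c * Real.log T) h2
      simpa [sub_eq_add_neg] using h3
    apply tendsto_atTop_mono' _ _ hLtop
    filter_upwards [Ioo_mem_nhdsLT hT] with s hs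
    exact hLB s ⟨hs.1.le, hs.2⟩
  -- exp(-H/(m+1)) tends to 0 at T⁻
  have hphi0 : Tendsto (fun s => Real.exp (-H s / (m + 1))) (𝓝[<] T) (𝓝 0) := by
    have h1 : Tendsto (fun s => -H s / (m + 1)) (𝓝[<] T) atBot := by
      apply (tendsto_div_const_atBot_of_pos hm1).2
      exact tendsto_neg_atBot_iff.2 hHtop
    exact Real.tendsto_exp_atBot.comp h1
  -- main argument for each t
  intro t ht
  set K : ℝ := (m + 1) / h 0 with hK
  set g : ℝ → ℝ := fun s => if s < T then -K * Real.exp (-H s / (m + 1)) else 0 with hg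
  have hgT : g T = 0 := by simp [hg]
  have hgeq : ∀ s, s < T → g s = -K * Real.exp (-H s / (m + 1)) := by
    intro s hs; simp [hg, hs]
  have hfcont : ContinuousOn (fun s => -K * Real.exp (-H s / (m + 1))) (Ico 0 T) :=
    continuousOn_const.mul ((hHcont.neg.div_const _).rexp)
  -- continuity of g on [t, T]
  have hgcont : ContinuousOn g (Icc t T) := by
    intro x hx
    rcases lt_or_eq_of_le hx.2 with hxT | hxT
    · -- x < T
      have hx0T : x ∈ Ico (0:ℝ) T := ⟨ht.1.trans hx.1, hxT⟩
      have hfw : ContinuousWithinAt (fun s => -K * Real.exp (-H s / (m + 1))) (Icc t T) x := by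
        apply (hfcont x hx0T).mono_of_mem_nhdsWithin
        have hIT : Iio T ∈ 𝓝[Icc t T] x := nhdsWithin_le_nhds (Iio_mem_nhds hxT)
        filter_upwards [hIT, self_mem_nhdsWithin] with y hy1 hy2
        exact ⟨ht.1.trans hy2.1, hy1⟩
      apply hfw.congr_of_eventuallyEq
      · have hIT : Iio T ∈ 𝓝[Icc t T] x := nhdsWithin_le_nhds (Iio_mem_nhds hxT)
        filter_upwards [hIT] with y hy
        exact hgeq y hy
      · exact hgeq x hxT
    · -- x = T
      subst hxT
      rw [ContinuousWithinAt, hgT]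
      have hsplit : Icc t x = Ico t x ∪ {x} := (Ico_union_right ht.2.le).symm
      rw [hsplit, nhdsWithin_union]
      apply Tendsto.sup
      · have hle : 𝓝[Ico t x] x ≤ 𝓝[<] x := nhdsWithin_mono _ (fun y hy => hy.2)
        have h2 : Tendsto (fun s => -K * Real.exp (-H s / (m + 1))) (𝓝[Ico t x] x)
            (𝓝 (-K * 0)) := (tendsto_const_nhds.mul hphi0).mono_left hle
        rw [mul_zero] at h2
        apply h2.congr'
        filter_upwards [self_mem_nhdsWithin] with y hy
        exact (hgeq y hy.2).symm
      · rw [nhdsWithin_singleton, ← hgT]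
        exact tendsto_pure_nhds g x
  -- derivative of g on (t, T)
  have hgd : ∀ x ∈ Ioo t T, HasDerivAt g (z x) x := by
    intro x hx
    have hx0T : x ∈ Ioo (0:ℝ) T := ⟨lt_of_le_of_lt ht.1 hx.1, hx.2⟩
    have hHd := hHderiv x hx0T
    have d1 : HasDerivAt (fun s => -H s / (m + 1)) (-h x / (m + 1)) x := hHd.neg.div_const _
    have d2 : HasDerivAt (fun s => Real.exp (-H s / (m + 1)))
        (Real.exp (-H x / (m + 1)) * (-h x / (m + 1))) x := d1.exp
    have d3 := d2.const_mul (-K)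
    have heqev : g =ᶠ[𝓝 x] fun s => -K * Real.exp (-H s / (m + 1)) := by
      filter_upwards [Iio_mem_nhds hx.2] with y hy
      exact hgeq y hy
    have d4 : HasDerivAt g (-K * (Real.exp (-H x / (m + 1)) * (-h x / (m + 1)))) x :=
      d3.congr_of_eventuallyEq heqev
    convert d4 using 1
    rw [hz x, hK]
    field_simp
  -- nonnegativity of z on (t, T)
  have hznn : ∀ x ∈ Ioo t T, 0 ≤ z x := by
    intro x hx
    have hx' : x ∈ Ico (0:ℝ) T := ⟨ht.1.trans hx.1.le, hx.2⟩
    rw [hz x]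
    have := hpos x hx'
    positivity
  -- integrability
  have hIoc : IntegrableOn z (Ioc t T) :=
    intervalIntegral.integrableOn_deriv_of_nonneg hgcont hgd hznn
  have hIoo : IntegrableOn z (Ioo t T) := hIoc.mono_set Ioo_subset_Ioc_self
  refine ⟨hIoo, ?_⟩
  -- the integral identity
  have hintz : IntervalIntegrable z volume t T :=
    (intervalIntegrable_iff_integrableOn_Ioc_of_le ht.2.le).2 hIoc
  have hFTC := intervalIntegral.integral_eq_sub_of_hasDeriv_right_of_le ht.2.le hgcont
    (fun x hx => (hgd x hx).hasDerivWithinAt) hintz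
  have hgt : g t = -K * Real.exp (-H t / (m + 1)) := hgeq t ht.2
  have hval : ∫ s in Ioo t T, z s = K * Real.exp (-H t / (m + 1)) := by
    rw [← MeasureTheory.integral_Ioc_eq_integral_Ioo, ← intervalIntegral.integral_of_le ht.2.le,
      hFTC, hgT, hgt]
    ring
  rw [hval, hz t, hK]
  field_simp
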